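/- Let f be a homeomorphism of the open unit disk 𝔻. Suppose there exist a point z ∈ 𝔻 with f(z) ≠ z and f²(z) ≠ z, a translation arc γ for f joining z to f(z), and an integer k ≥ 2 such that f^k(γ) ∩ γ ≠ ∅. Then f is recurrent. (Proposition 1.4, case (ii).) -/

import Mathlib

open Set Filter Metric Topology

noncomputable section

/-- The open unit disk in the complex plane. -/
abbrev Disk : Set ℂ := Metric.ball 0 1

/-- The `k`-th iterate (`k ∈ ℤ`) of a homeomorphism of the open unit disk. -/
def fiter (f : ↥Disk ≃ₜ ↥Disk) (k : ℤ) : ↥Disk → ↥Disk := fun z => (f.toEquiv ^ k) z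

/-- A subset `X` of the disk is free for `f` if `f(X) ∩ X = ∅`. -/
def IsFreeSet (f : ↥Disk ≃ₜ ↥Disk) (X : Set ↥Disk) : Prop := (⇑f '' X) ∩ X = ∅

/-- An open disk: an open subset of `Disk` homeomorphic to `Disk`. -/
def IsOpenDisk (U : Set ↥Disk) : Prop := IsOpen U ∧ Nonempty (↥U ≃ₜ ↥Disk)

/-- `f` is recurrent: there is a closed chain of pairwise disjoint free open disks. -/
def RecurrentHomeo (f : ↥Disk ≃ₜ ↥Disk) : Prop :=
  ∃ r : ℕ, 1 ≤ r ∧ ∃ X : ZMod r → Set ↥Disk,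
    (∀ i, IsOpenDisk (X i)) ∧ (∀ i, IsFreeSet f (X i)) ∧
    (Pairwise fun i j => Disjoint (X i) (X j)) ∧
    (∀ i, ∃ k : ℤ, 1 ≤ k ∧ ((fiter f k '' X i) ∩ X (i + 1)).Nonempty)

/-- `γ` is a segment of the disk joining `a` to `b`: the image of an injective
continuous map defined on `[0,1]` sending `0` to `a` and `1` to `b`. -/
def IsSegment (γ : Set ↥Disk) (a b : ↥Disk) : Prop :=
  ∃ g : ℝ → ↥Disk, ContinuousOn g (Set.Icc 0 1) ∧ Set.InjOn g (Set.Icc 0 1) ∧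
    g 0 = a ∧ g 1 = b ∧ γ = g '' Set.Icc 0 1

/-- `γ` is a segment (with some endpoints). -/
def IsSegmentSet (γ : Set ↥Disk) : Prop := ∃ a b, IsSegment γ a b

/-- A translation arc for `f` at `z`. -/
def IsTranslationArc (f : ↥Disk ≃ₜ ↥Disk) (z : ↥Disk) (γ : Set ↥Disk) : Prop :=
  f z ≠ z ∧ IsSegment γ z (f z) ∧
  (f (f z) = z → (⇑f '' γ) ∩ γ = {z, f z}) ∧
  (f (f z) ≠ z → (⇑f '' γ) ∩ γ = {f z})

namespace HandelAux

/-- Radial push map: moves `0` to `v`, identity outside the unit ball. -/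
def pushFun (v : ℂ) (w : ℂ) : ℂ := w + ((max 0 (1 - ‖w‖) : ℝ) : ℂ) * v

lemma pushFun_continuous (v : ℂ) : Continuous (pushFun v) := by
  unfold pushFun; fun_prop

lemma pushFun_eq_self {v w : ℂ} (hw : 1 ≤ ‖w‖) : pushFun v w = w := by
  unfold pushFun
  have h : max 0 (1 - ‖w‖) = 0 := max_eq_left (by linarith)
  rw [h]; simp

lemma pushFun_zero (v : ℂ) : pushFun v 0 = v := by
  unfold pushFun; simp

lemma pushFun_injective {v : ℂ} (hv : ‖v‖ < 1) : Function.Injective (pushFun v) := by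
  intro a b hab
  have h1 : a - b = ((max 0 (1 - ‖b‖) - max 0 (1 - ‖a‖) : ℝ) : ℂ) * v := by
    unfold pushFun at hab
    push_cast
    linear_combination hab
  have h2 : |max 0 (1 - ‖b‖) - max 0 (1 - ‖a‖)| ≤ |(1 - ‖b‖) - (1 - ‖a‖)| := by
    calc |max 0 (1 - ‖b‖) - max 0 (1 - ‖a‖)|
        = |max (1 - ‖b‖) 0 - max (1 - ‖a‖) 0| := by rw [max_comm (0:ℝ), max_comm (0:ℝ)]
      _ ≤ |(1 - ‖b‖) - (1 - ‖a‖)| := abs_max_sub_max_le_abs _ _ _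
  have h3 : |(1 - ‖b‖) - (1 - ‖a‖)| = |‖a‖ - ‖b‖| := by ring_nf
  have h4 : |‖a‖ - ‖b‖| ≤ ‖a - b‖ := abs_norm_sub_norm_le a b
  have h5 : ‖a - b‖ = |max 0 (1 - ‖b‖) - max 0 (1 - ‖a‖)| * ‖v‖ := by
    rw [h1, norm_mul, Complex.norm_real, Real.norm_eq_abs]
  have h6 : ‖a - b‖ ≤ ‖a - b‖ * ‖v‖ := by
    calc ‖a - b‖ = |max 0 (1 - ‖b‖) - max 0 (1 - ‖a‖)| * ‖v‖ := h5
      _ ≤ ‖a - b‖ * ‖v‖ := by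
          apply mul_le_mul_of_nonneg_right _ (norm_nonneg v)
          calc |max 0 (1 - ‖b‖) - max 0 (1 - ‖a‖)| ≤ |(1 - ‖b‖) - (1 - ‖a‖)| := h2
            _ = |‖a‖ - ‖b‖| := h3
            _ ≤ ‖a - b‖ := h4
  have h7 : ‖a - b‖ = 0 := by nlinarith [norm_nonneg (a - b)]
  exact sub_eq_zero.mp (norm_eq_zero.mp h7)

lemma pushFun_norm_le {v w : ℂ} (hv : ‖v‖ < 1) (hw : ‖w‖ ≤ 1) : ‖pushFun v w‖ ≤ 1 := by
  unfold pushFun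
  have hm : max 0 (1 - ‖w‖) = 1 - ‖w‖ := max_eq_right (by linarith)
  calc ‖w + ((max 0 (1 - ‖w‖) : ℝ) : ℂ) * v‖ ≤ ‖w‖ + ‖((max 0 (1 - ‖w‖) : ℝ) : ℂ) * v‖ := norm_add_le _ _
    _ = ‖w‖ + (1 - ‖w‖) * ‖v‖ := by
        rw [norm_mul, Complex.norm_real, Real.norm_eq_abs, hm, abs_of_nonneg (by linarith)]
    _ ≤ 1 := by nlinarith [norm_nonneg v, norm_nonneg w]

lemma pushFun_norm_lt {v w : ℂ} (hv : ‖v‖ < 1) (hw : ‖w‖ < 1) : ‖pushFun v w‖ < 1 := by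
  unfold pushFun
  have hm : max 0 (1 - ‖w‖) = 1 - ‖w‖ := max_eq_right (by linarith)
  calc ‖w + ((max 0 (1 - ‖w‖) : ℝ) : ℂ) * v‖ ≤ ‖w‖ + ‖((max 0 (1 - ‖w‖) : ℝ) : ℂ) * v‖ := norm_add_le _ _
    _ = ‖w‖ + (1 - ‖w‖) * ‖v‖ := by
        rw [norm_mul, Complex.norm_real, Real.norm_eq_abs, hm, abs_of_nonneg (by linarith)]
    _ < 1 := by nlinarith [norm_nonneg v]

lemma pushFun_surj_ball {v : ℂ} (hv : ‖v‖ < 1) {u : ℂ} (hu : ‖u‖ ≤ 1) :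
    ∃ w, ‖w‖ ≤ 1 ∧ pushFun v w = u := by
  set h : ℝ → ℝ := fun t => ‖u - ((1 - t : ℝ) : ℂ) * v‖ - t with hh
  have hc : ContinuousOn h (Icc 0 1) := by
    apply Continuous.continuousOn; unfold h; fun_prop
  have h0 : 0 ≤ h 0 := by simp [hh]
  have h1 : h 1 ≤ 0 := by simpa [hh] using hu
  have : (0:ℝ) ∈ h '' Icc 0 1 := intermediate_value_Icc' (by norm_num) hc ⟨h1, h0⟩
  obtain ⟨t, ht, hht⟩ := this
  refine ⟨u - ((1 - t : ℝ) : ℂ) * v, ?_, ?_⟩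
  · have : ‖u - ((1 - t : ℝ) : ℂ) * v‖ = t := by
      have := hht; simp only [hh] at this; linarith
    rw [this]; exact ht.2
  · have hnorm : ‖u - ((1 - t : ℝ) : ℂ) * v‖ = t := by
      have := hht; simp only [hh] at this; linarith
    unfold pushFun
    rw [hnorm]
    have : max 0 (1 - t) = 1 - t := max_eq_right (by linarith [ht.2])
    rw [this]
    ring

/-- The closed unit ball in `ℂ`. -/
def Kball : Set ℂ := Metric.closedBall 0 1

lemma mem_Kball {w : ℂ} : w ∈ Kball ↔ ‖w‖ ≤ 1 := by
  simp [Kball, Metric.mem_closedBall, dist_eq_norm]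

instance : CompactSpace ↥Kball := isCompact_iff_compactSpace.mp (isCompact_closedBall _ _)

def pushRestrict (v : ℂ) (hv : ‖v‖ < 1) : ↥Kball → ↥Kball :=
  fun w => ⟨pushFun v w, mem_Kball.mpr (pushFun_norm_le hv (mem_Kball.mp w.2))⟩

lemma pushRestrict_bijective (v : ℂ) (hv : ‖v‖ < 1) : Function.Bijective (pushRestrict v hv) := by
  constructor
  · intro a b hab
    exact Subtype.ext (pushFun_injective hv (congrArg Subtype.val hab))
  · rintro ⟨u, hu⟩
    obtain ⟨w, hw, hwu⟩ := pushFun_surj_ball hv (mem_Kball.mp hu)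
    exact ⟨⟨w, mem_Kball.mpr hw⟩, Subtype.ext hwu⟩

def pushEquivK (v : ℂ) (hv : ‖v‖ < 1) : ↥Kball ≃ ↥Kball :=
  Equiv.ofBijective _ (pushRestrict_bijective v hv)

lemma pushRestrict_continuous (v : ℂ) (hv : ‖v‖ < 1) : Continuous (pushRestrict v hv) :=
  ((pushFun_continuous v).comp continuous_subtype_val).subtype_mk _

def pushHomeoK (v : ℂ) (hv : ‖v‖ < 1) : ↥Kball ≃ₜ ↥Kball :=
  Continuous.homeoOfEquivCompactToT2 (f := pushEquivK v hv) (pushRestrict_continuous v hv)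

/-- retraction of ℂ onto the closed unit ball -/
def projK (u : ℂ) : ↥Kball :=
  ⟨(max 1 ‖u‖)⁻¹ • u, by
    have h1 : (0:ℝ) < max 1 ‖u‖ := lt_max_of_lt_left one_pos
    rw [mem_Kball, norm_smul, norm_inv, Real.norm_eq_abs, abs_of_pos h1,
      inv_mul_le_one₀ h1]
    exact le_max_right _ _⟩

lemma projK_continuous : Continuous projK := by
  apply Continuous.subtype_mk
  have h : ∀ u : ℂ, (1:ℝ) ⊔ ‖u‖ ≠ 0 := fun u => (lt_max_of_lt_left one_pos).ne'
  exact ((continuous_const.max continuous_norm).inv₀ h).smul continuous_id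

lemma projK_eq {u : ℂ} (hu : ‖u‖ ≤ 1) : (projK u : ℂ) = u := by
  simp only [projK]
  rw [max_eq_left hu]
  simp

lemma pushFun_sphere {v u : ℂ} (hu : ‖u‖ = 1) : pushFun v u = u :=
  pushFun_eq_self hu.ge

/-- the global inverse of the push map -/
def pushInv (v : ℂ) (hv : ‖v‖ < 1) : ℂ → ℂ :=
  fun u => if ‖u‖ ≤ 1 then ((pushHomeoK v hv).symm (projK u) : ℂ) else u

lemma pushHomeoK_apply (v : ℂ) (hv : ‖v‖ < 1) (w : ↥Kball) :
    (pushHomeoK v hv w : ℂ) = pushFun v (w : ℂ) := rfl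

lemma pushHomeoK_symm_sphere (v : ℂ) (hv : ‖v‖ < 1) {u : ℂ} (hu : ‖u‖ = 1)
    (hmem : u ∈ Kball) : ((pushHomeoK v hv).symm ⟨u, hmem⟩ : ℂ) = u := by
  have h : pushHomeoK v hv ⟨u, hmem⟩ = ⟨u, hmem⟩ :=
    Subtype.ext (pushFun_sphere hu)
  have h2 : (pushHomeoK v hv).symm ⟨u, hmem⟩ = ⟨u, hmem⟩ := by
    have := congrArg (pushHomeoK v hv).symm h
    rw [Homeomorph.symm_apply_apply] at this; exact this.symm
  rw [h2]

lemma pushInv_continuous (v : ℂ) (hv : ‖v‖ < 1) : Continuous (pushInv v hv) := by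
  unfold pushInv
  apply Continuous.if_le
  · exact continuous_subtype_val.comp ((pushHomeoK v hv).symm.continuous.comp projK_continuous)
  · exact continuous_id
  · exact continuous_norm
  · exact continuous_const
  · intro u hu
    have hmem : u ∈ Kball := mem_Kball.mpr hu.le
    have hproj : projK u = ⟨u, hmem⟩ := Subtype.ext (projK_eq hu.le)
    rw [hproj]
    exact pushHomeoK_symm_sphere v hv hu hmem

lemma pushInv_left (v : ℂ) (hv : ‖v‖ < 1) (w : ℂ) : pushInv v hv (pushFun v w) = w := by
  by_cases hw : ‖w‖ ≤ 1
  · have hmemw : w ∈ Kball := mem_Kball.mpr hw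
    have hpw : ‖pushFun v w‖ ≤ 1 := pushFun_norm_le hv hw
    have hmem : pushFun v w ∈ Kball := mem_Kball.mpr hpw
    unfold pushInv
    rw [if_pos hpw]
    have hproj : projK (pushFun v w) = ⟨pushFun v w, hmem⟩ := Subtype.ext (projK_eq hpw)
    rw [hproj]
    have h2 : pushHomeoK v hv ⟨w, hmemw⟩ = ⟨pushFun v w, hmem⟩ := rfl
    rw [← h2, Homeomorph.symm_apply_apply]
  · push_neg at hw
    have h1 : pushFun v w = w := pushFun_eq_self hw.le
    unfold pushInv
    rw [h1, if_neg (not_le.mpr hw)]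

lemma pushInv_right (v : ℂ) (hv : ‖v‖ < 1) (u : ℂ) : pushFun v (pushInv v hv u) = u := by
  by_cases hu : ‖u‖ ≤ 1
  · have hmem : u ∈ Kball := mem_Kball.mpr hu
    unfold pushInv
    rw [if_pos hu]
    have hproj : projK u = ⟨u, hmem⟩ := Subtype.ext (projK_eq hu)
    rw [hproj]
    have := congrArg Subtype.val
      (Homeomorph.apply_symm_apply (pushHomeoK v hv) ⟨u, hmem⟩)
    exact this
  · push_neg at hu
    unfold pushInv
    rw [if_neg (not_le.mpr hu)]
    exact pushFun_eq_self hu.le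

/-- The push homeomorphism of the plane. -/
def pushHomeo (v : ℂ) (hv : ‖v‖ < 1) : ℂ ≃ₜ ℂ where
  toFun := pushFun v
  invFun := pushInv v hv
  left_inv := pushInv_left v hv
  right_inv := pushInv_right v hv
  continuous_toFun := pushFun_continuous v
  continuous_invFun := pushInv_continuous v hv

lemma pushHomeo_apply (v : ℂ) (hv : ‖v‖ < 1) (w : ℂ) : pushHomeo v hv w = pushFun v w := rfl

lemma pushHomeo_zero (v : ℂ) (hv : ‖v‖ < 1) : pushHomeo v hv 0 = v := pushFun_zero v

lemma pushHomeo_eq_self (v : ℂ) (hv : ‖v‖ < 1) {w : ℂ} (hw : 1 ≤ ‖w‖) :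
    pushHomeo v hv w = w := pushFun_eq_self hw

lemma pushHomeo_ball_iff (v : ℂ) (hv : ‖v‖ < 1) (w : ℂ) :
    ‖pushHomeo v hv w‖ < 1 ↔ ‖w‖ < 1 := by
  constructor
  · intro h
    by_contra hw
    push_neg at hw
    rw [pushHomeo_eq_self v hv hw] at h
    linarith
  · exact pushFun_norm_lt hv

/-- Affine homeomorphism `w ↦ c + r * w` of the plane. -/
def affineHomeo (c : ℂ) (r : ℝ) (hr : 0 < r) : ℂ ≃ₜ ℂ where
  toFun w := c + (r : ℂ) * w
  invFun u := (u - c) / (r : ℂ)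
  left_inv w := by
    have hr' : (r : ℂ) ≠ 0 := Complex.ofReal_ne_zero.mpr hr.ne'
    field_simp
    ring
  right_inv u := by
    have hr' : (r : ℂ) ≠ 0 := Complex.ofReal_ne_zero.mpr hr.ne'
    field_simp
    ring
  continuous_toFun := by fun_prop
  continuous_invFun := by fun_prop

lemma affineHomeo_symm_apply (c : ℂ) (r : ℝ) (hr : 0 < r) (u : ℂ) :
    (affineHomeo c r hr).symm u = (u - c) / (r : ℂ) := rfl

lemma norm_affine_inv_lt_iff (c : ℂ) (r : ℝ) (hr : 0 < r) (u : ℂ) :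
    ‖(u - c) / (r : ℂ)‖ < 1 ↔ u ∈ ball c r := by
  rw [mem_ball, dist_eq_norm, norm_div, Complex.norm_real, Real.norm_eq_abs,
    abs_of_pos hr, div_lt_one hr]

lemma exists_ballPush (c : ℂ) (r : ℝ) (hr : 0 < r) {a : ℂ} (ha : a ∈ ball c r) :
    ∃ Φ : ℂ ≃ₜ ℂ, Φ a = c ∧ (∀ w, w ∉ ball c r → Φ w = w) ∧
      (∀ w, Φ w ∈ ball c r ↔ w ∈ ball c r) := by
  set v : ℂ := (a - c) / (r : ℂ) with hvdef
  have hv : ‖v‖ < 1 := (norm_affine_inv_lt_iff c r hr a).mpr ha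
  set A := affineHomeo c r hr with hA
  set Ψ : ℂ ≃ₜ ℂ := A.symm.trans ((pushHomeo v hv).trans A) with hΨ
  have hΨapply : ∀ w, Ψ w = A (pushHomeo v hv (A.symm w)) := fun w => rfl
  have hΨball : ∀ w, Ψ w ∈ ball c r ↔ w ∈ ball c r := by
    intro w
    rw [hΨapply]
    have h1 : ∀ u : ℂ, A u ∈ ball c r ↔ ‖u‖ < 1 := by
      intro u
      have : (A.symm) (A u) = u := A.symm_apply_apply u
      rw [← norm_affine_inv_lt_iff c r hr (A u), ← affineHomeo_symm_apply c r hr, this]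
    rw [h1, pushHomeo_ball_iff, ← norm_affine_inv_lt_iff c r hr w]
    rfl
  have hΨout : ∀ w, w ∉ ball c r → Ψ w = w := by
    intro w hw
    rw [hΨapply]
    have h1 : 1 ≤ ‖A.symm w‖ := by
      by_contra h
      push_neg at h
      exact hw ((norm_affine_inv_lt_iff c r hr w).mp h)
    rw [pushHomeo_eq_self v hv h1, Homeomorph.apply_symm_apply]
  have hΨc : Ψ c = a := by
    rw [hΨapply]
    have h0 : A.symm c = 0 := by
      rw [affineHomeo_symm_apply]
      simp
    rw [h0, pushHomeo_zero]
    show c + (r : ℂ) * ((a - c) / (r : ℂ)) = a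
    have hr' : (r : ℂ) ≠ 0 := Complex.ofReal_ne_zero.mpr hr.ne'
    field_simp
    ring
  refine ⟨Ψ.symm, ?_, ?_, ?_⟩
  · rw [← hΨc, Homeomorph.symm_apply_apply]
  · intro w hw
    have := hΨout w hw
    calc Ψ.symm w = Ψ.symm (Ψ w) := by rw [this]
      _ = w := Ψ.symm_apply_apply w
  · intro w
    constructor
    · intro h
      have := (hΨball (Ψ.symm w)).mpr h
      rwa [Homeomorph.apply_symm_apply] at this
    · intro h
      by_contra h2
      have h3 : Ψ (Ψ.symm w) = Ψ.symm w := hΨout (Ψ.symm w) h2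
      rw [Homeomorph.apply_symm_apply] at h3
      rw [h3] at h
      exact h2 h

lemma ball_homeo_unit (c : ℂ) (r : ℝ) (hr : 0 < r) :
    Nonempty (↥(ball c r) ≃ₜ ↥(ball (0:ℂ) 1)) := by
  set A := affineHomeo c r hr with hA
  have himg : ball c r = A '' (ball (0:ℂ) 1) := by
    ext u
    constructor
    · intro hu
      refine ⟨A.symm u, ?_, A.apply_symm_apply u⟩
      rw [mem_ball, dist_zero_right]
      show ‖(u - c) / (r : ℂ)‖ < 1
      exact (norm_affine_inv_lt_iff c r hr u).mpr hu
    · rintro ⟨w, hw, rfl⟩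
      rw [mem_ball, dist_zero_right] at hw
      have h1 : A.symm (A w) = w := A.symm_apply_apply w
      rw [← norm_affine_inv_lt_iff c r hr (A w), ← affineHomeo_symm_apply c r hr, h1]
      exact hw
  exact ⟨(Homeomorph.setCongr himg).trans (Homeomorph.image A (ball (0:ℂ) 1)).symm⟩

/-- Any two points of an open preconnected subset of the plane lie in a common
open topological disk inside it. -/
lemma exists_disk_pair {O : Set ℂ} (hO : IsOpen O) (hc : IsPreconnected O)
    {x y : ℂ} (hx : x ∈ O) (hy : y ∈ O) :
    ∃ U : Set ℂ, IsOpen U ∧ U ⊆ O ∧ x ∈ U ∧ y ∈ U ∧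
      Nonempty (↥U ≃ₜ ↥(ball (0:ℂ) 1)) := by
  set S : Set ℂ := {p | ∃ U : Set ℂ, IsOpen U ∧ U ⊆ O ∧ x ∈ U ∧ p ∈ U ∧
    Nonempty (↥U ≃ₜ ↥(ball (0:ℂ) 1))} with hS
  have hSopen : IsOpen S := by
    rw [isOpen_iff_forall_mem_open]
    rintro p ⟨U, hUo, hUO, hxU, hpU, hh⟩
    exact ⟨U, fun q hq => ⟨U, hUo, hUO, hxU, hq, hh⟩, hUo, hpU⟩
  have hxS : x ∈ S := by
    obtain ⟨r, hr, hball⟩ := Metric.isOpen_iff.mp hO x hx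
    exact ⟨ball x r, isOpen_ball, hball, mem_ball_self hr, mem_ball_self hr,
      ball_homeo_unit _ _ hr⟩
  have hTopen : IsOpen (O \ S) := by
    rw [isOpen_iff_forall_mem_open]
    rintro p ⟨hpO, hpS⟩
    obtain ⟨r, hr, hball⟩ := Metric.isOpen_iff.mp hO p hpO
    refine ⟨ball p r, ?_, isOpen_ball, mem_ball_self hr⟩
    intro q hq
    refine ⟨hball hq, ?_⟩
    rintro ⟨U', hU'o, hU'O, hxU', hqU', hh'⟩
    apply hpS
    by_cases hxball : x ∈ ball p r
    · exact ⟨ball p r, isOpen_ball, hball, hxball, mem_ball_self hr,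
        ball_homeo_unit _ _ hr⟩
    · obtain ⟨Φ, hΦq, hΦout, hΦball⟩ := exists_ballPush p r hr hq
      refine ⟨Φ '' U', (Homeomorph.isOpen_image Φ).mpr hU'o, ?_, ?_, ?_, ?_⟩
      · rintro _ ⟨t, htU', rfl⟩
        by_cases ht : t ∈ ball p r
        · exact hball ((hΦball t).mpr ht)
        · rw [hΦout t ht]; exact hU'O htU'
      · exact ⟨x, hxU', hΦout x hxball⟩
      · exact ⟨q, hqU', hΦq⟩
      · obtain ⟨e⟩ := hh'
        exact ⟨((Homeomorph.image Φ U').symm).trans e⟩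
  by_cases hyS : y ∈ S
  · exact hyS
  · exfalso
    have hcover : O ⊆ S ∪ (O \ S) := by
      intro p hp
      by_cases h : p ∈ S
      · exact Or.inl h
      · exact Or.inr ⟨hp, h⟩
    have h1 : (O ∩ S).Nonempty := ⟨x, hx, hxS⟩
    have h2 : (O ∩ (O \ S)).Nonempty := ⟨y, hy, hy, hyS⟩
    obtain ⟨p, _, hpS, _, hpS'⟩ := hc S (O \ S) hSopen hTopen hcover h1 h2
    exact hpS' hpS

lemma free_pair_disk (f : ↥Disk ≃ₜ ↥Disk) (σ : Set ↥Disk) (hσc : IsCompact σ)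
    (hσconn : IsPreconnected σ) (hfree : (⇑f '' σ) ∩ σ = ∅)
    {x y : ↥Disk} (hx : x ∈ σ) (hy : y ∈ σ) :
    ∃ X : Set ↥Disk, IsOpenDisk X ∧ IsFreeSet f X ∧ x ∈ X ∧ y ∈ X := by
  classical
  set σ' : Set ℂ := Subtype.val '' σ with hσ'def
  have hσ'c : IsCompact σ' := hσc.image continuous_subtype_val
  have hσ'sub : σ' ⊆ Disk := by rintro _ ⟨p, _, rfl⟩; exact p.2
  obtain ⟨δ0, hδ0pos, hδ0sub⟩ :=
    hσ'c.exists_cthickening_subset_open Metric.isOpen_ball hσ'sub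
  -- compact neighborhood in the subtype
  set K : Set ↥Disk := Subtype.val ⁻¹' (Metric.cthickening δ0 σ') with hKdef
  have hKcomp : IsCompact K := by
    rw [Topology.IsEmbedding.subtypeVal.isInducing.isCompact_preimage_iff]
    · exact hσ'c.cthickening
    · rw [Subtype.range_coe]
      exact hδ0sub
  -- disjoint thickenings of `f '' σ` and `σ` in the subtype
  have hdisj0 : Disjoint (⇑f '' σ) σ := Set.disjoint_iff_inter_eq_empty.mpr hfree
  obtain ⟨δ1, hδ1pos, hdisj⟩ :=
    hdisj0.exists_thickenings (hσc.image f.continuous) hσc.isClosed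
  -- uniform continuity of f on K
  have hunif := hKcomp.uniformContinuousOn_of_continuous f.continuous.continuousOn
  rw [Metric.uniformContinuousOn_iff] at hunif
  obtain ⟨δ2, hδ2pos, hδ2⟩ := hunif δ1 hδ1pos
  set δ : ℝ := min δ0 (min δ1 δ2) with hδdef
  have hδpos : 0 < δ := lt_min hδ0pos (lt_min hδ1pos hδ2pos)
  have hδ0' : δ ≤ δ0 := min_le_left _ _
  have hδ1' : δ ≤ δ1 := le_trans (min_le_right _ _) (min_le_left _ _)
  have hδ2' : δ ≤ δ2 := le_trans (min_le_right _ _) (min_le_right _ _)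
  set O : Set ℂ := Metric.thickening δ σ' with hOdef
  have hOopen : IsOpen O := Metric.isOpen_thickening
  have hOsub : O ⊆ Disk :=
    (Metric.thickening_subset_cthickening_of_le hδ0' _).trans hδ0sub
  -- membership transfer
  have hmem_trans : ∀ p : ↥Disk, (p : ℂ) ∈ O → ∃ q ∈ σ, dist p q < δ := by
    intro p hp
    obtain ⟨z, hzσ', hdist⟩ := Metric.mem_thickening_iff.mp hp
    obtain ⟨q, hqσ, rfl⟩ := hzσ'
    exact ⟨q, hqσ, by rwa [Subtype.dist_eq]⟩
  -- freeness at scale δ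
  have hfreeδ : ∀ a b : ↥Disk, (a : ℂ) ∈ O → (b : ℂ) ∈ O → f a ≠ b := by
    intro a b ha hb heq
    obtain ⟨s, hsσ, hdistas⟩ := hmem_trans a ha
    have haK : a ∈ K := by
      exact Metric.thickening_subset_cthickening_of_le hδ0' _ ha
    have hsK : s ∈ K := by
      show (s : ℂ) ∈ Metric.cthickening δ0 σ'
      exact Metric.self_subset_cthickening σ' ⟨s, hsσ, rfl⟩
    have hdist2 : dist a s < δ2 := lt_of_lt_of_le hdistas hδ2'
    have hfa : dist (f a) (f s) < δ1 := hδ2 a haK s hsK hdist2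
    have hfa_mem : f a ∈ Metric.thickening δ1 (⇑f '' σ) :=
      Metric.mem_thickening_iff.mpr ⟨f s, ⟨s, hsσ, rfl⟩, hfa⟩
    obtain ⟨q, hqσ, hdistbq⟩ := hmem_trans b hb
    have hb_mem : b ∈ Metric.thickening δ1 σ :=
      Metric.mem_thickening_iff.mpr ⟨q, hqσ, lt_of_lt_of_le hdistbq hδ1'⟩
    rw [heq] at hfa_mem
    exact (Set.disjoint_left.mp hdisj hfa_mem) hb_mem
  -- O is preconnected
  have hσ'conn : IsPreconnected σ' := hσconn.image _ continuous_subtype_val.continuousOn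
  have hz0 : (x : ℂ) ∈ σ' := ⟨x, hx, rfl⟩
  have hOconn : IsPreconnected O := by
    have hOeq : O = ⋃ s : ↥σ', (ball (s : ℂ) δ ∪ σ') := by
      ext u
      constructor
      · intro hu
        obtain ⟨z, hz, hdist⟩ := Metric.mem_thickening_iff.mp hu
        exact Set.mem_iUnion.mpr ⟨⟨z, hz⟩, Or.inl (mem_ball.mpr hdist)⟩
      · intro hu
        obtain ⟨⟨s, hs⟩, hu'⟩ := Set.mem_iUnion.mp hu
        rcases hu' with h | h
        · exact Metric.mem_thickening_iff.mpr ⟨s, hs, mem_ball.mp h⟩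
        · exact Metric.self_subset_thickening hδpos σ' h
    rw [hOeq]
    apply isPreconnected_iUnion
    · exact ⟨(x : ℂ), Set.mem_iInter.mpr fun s => Or.inr hz0⟩
    · intro s
      exact IsPreconnected.union (s : ℂ) (mem_ball_self hδpos) s.2
        (convex_ball _ _).isPreconnected hσ'conn
  -- the open disk downstairs
  have hxO : (x : ℂ) ∈ O := Metric.self_subset_thickening hδpos σ' hz0
  have hyO : (y : ℂ) ∈ O := Metric.self_subset_thickening hδpos σ' ⟨y, hy, rfl⟩
  obtain ⟨U, hUo, hUO, hxU, hyU, ⟨e⟩⟩ := exists_disk_pair hOopen hOconn hxO hyO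
  have hUDisk : U ⊆ Disk := hUO.trans hOsub
  -- lift to subtype
  refine ⟨Subtype.val ⁻¹' U, ⟨hUo.preimage continuous_subtype_val, ?_⟩, ?_, hxU, hyU⟩
  · -- homeomorphism
    refine ⟨Homeomorph.trans ?_ e⟩
    exact {
      toFun := fun p => ⟨(p : ↥Disk), p.2⟩
      invFun := fun u => ⟨⟨(u : ℂ), hUDisk u.2⟩, u.2⟩
      left_inv := fun p => rfl
      right_inv := fun u => rfl
      continuous_toFun := by
        apply Continuous.subtype_mk
        exact continuous_subtype_val.comp continuous_subtype_val
      continuous_invFun := by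
        apply Continuous.subtype_mk
        exact Continuous.subtype_mk continuous_subtype_val _ }
  · -- freeness
    rw [IsFreeSet, Set.eq_empty_iff_forall_notMem]
    rintro p ⟨⟨a, haX, rfl⟩, hpX⟩
    exact hfreeδ a (f a) (hUO haX) (hUO hpX) rfl

section Dynamics

lemma fiter_one (f : ↥Disk ≃ₜ ↥Disk) (p : ↥Disk) : fiter f 1 p = f p := by
  simp [fiter]

lemma fiter_add (f : ↥Disk ≃ₜ ↥Disk) (a b : ℤ) (p : ↥Disk) :
    fiter f (a + b) p = fiter f a (fiter f b p) := by
  simp [fiter, zpow_add, Equiv.Perm.mul_apply]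

lemma singleton_free (f : ↥Disk ≃ₜ ↥Disk) {p : ↥Disk} (hp : f p ≠ p) :
    (⇑f '' ({p} : Set ↥Disk)) ∩ {p} = ∅ := by
  rw [Set.image_singleton, Set.eq_empty_iff_forall_notMem]
  rintro q ⟨hq1, hq2⟩
  rw [Set.mem_singleton_iff] at hq1 hq2
  exact hp (hq1.symm.trans hq2)

/-- A compact connected free subset of the arc avoiding `f z`. -/
lemma arc_sub_free (f : ↥Disk ≃ₜ ↥Disk) (z : ↥Disk) (hz2 : f (f z) ≠ z)
    (γ : Set ↥Disk) (hγ : IsTranslationArc f z γ)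
    {x y : ↥Disk} (hx : x ∈ γ) (hy : y ∈ γ)
    (hxfz : x ≠ f z) (hyfz : y ≠ f z) :
    ∃ σ : Set ↥Disk, IsCompact σ ∧ IsPreconnected σ ∧ (⇑f '' σ) ∩ σ = ∅ ∧
      x ∈ σ ∧ y ∈ σ := by
  obtain ⟨hfz, ⟨g, hgc, hgi, hg0, hg1, hγeq⟩, _, htr⟩ := hγ
  have hfγ : (⇑f '' γ) ∩ γ = {f z} := htr hz2
  rw [hγeq] at hx hy
  obtain ⟨a, haI, hax⟩ := hx
  obtain ⟨b, hbI, hby⟩ := hy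
  have h1I : (1:ℝ) ∈ Set.Icc (0:ℝ) 1 := ⟨zero_le_one, le_rfl⟩
  have ha1 : a < 1 := by
    rcases lt_or_eq_of_le haI.2 with h | h
    · exact h
    · exact absurd (by rw [← hax, h, hg1]) hxfz
  have hb1 : b < 1 := by
    rcases lt_or_eq_of_le hbI.2 with h | h
    · exact h
    · exact absurd (by rw [← hby, h, hg1]) hyfz
  set t : ℝ := max a b with htdef
  have ht1 : t < 1 := max_lt ha1 hb1
  have hsubI : Set.Icc (0:ℝ) t ⊆ Set.Icc (0:ℝ) 1 := Set.Icc_subset_Icc le_rfl ht1.le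
  set σ : Set ↥Disk := g '' Set.Icc 0 t with hσdef
  have hσγ : σ ⊆ γ := by rw [hγeq]; exact Set.image_mono hsubI
  refine ⟨σ, isCompact_Icc.image_of_continuousOn (hgc.mono hsubI),
    isPreconnected_Icc.image g (hgc.mono hsubI), ?_,
    ⟨a, ⟨haI.1, le_max_left a b⟩, hax⟩, ⟨b, ⟨hbI.1, le_max_right a b⟩, hby⟩⟩
  rw [Set.eq_empty_iff_forall_notMem]
  rintro p ⟨⟨q, hqσ, rfl⟩, hpσ⟩
  have hmem : f q ∈ (⇑f '' γ) ∩ γ := ⟨⟨q, hσγ hqσ, rfl⟩, hσγ hpσ⟩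
  rw [hfγ, Set.mem_singleton_iff] at hmem
  obtain ⟨s, hsI, hsp⟩ := hpσ
  have : g s = g 1 := by rw [hsp, hmem, ← hg1]
  have hs1 : s = 1 := hgi (hsubI hsI) h1I this
  have : (1:ℝ) ≤ t := hs1 ▸ hsI.2
  linarith

lemma exists_free_pair (f : ↥Disk ≃ₜ ↥Disk) (z : ↥Disk)
    (hz : f z ≠ z) (hz2 : f (f z) ≠ z)
    (γ : Set ↥Disk) (hγ : IsTranslationArc f z γ)
    (k : ℤ) (hk : 2 ≤ k)
    (hmeet : ((fiter f k '' γ) ∩ γ).Nonempty) :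
    ∃ (σ : Set ↥Disk) (x y : ↥Disk) (m : ℤ),
      IsCompact σ ∧ IsPreconnected σ ∧ (⇑f '' σ) ∩ σ = ∅ ∧
      x ∈ σ ∧ y ∈ σ ∧ 1 ≤ m ∧ fiter f m x = y := by
  obtain ⟨p, ⟨w, hwγ, hwp⟩, hpγ⟩ := hmeet
  have hzγ : z ∈ γ := by
    obtain ⟨_, ⟨g, hgc, hgi, hg0, hg1, hγeq⟩, _, _⟩ := hγ
    rw [hγeq]
    exact ⟨0, ⟨le_rfl, zero_le_one⟩, hg0⟩
  have hznfz : z ≠ f z := Ne.symm hz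
  have hffz : f (f z) ≠ f z := fun h => hz (f.injective h)
  by_cases hw : w = f z
  · by_cases hp2 : p = f z
    · -- f z is periodic of period k
      refine ⟨{f z}, f z, f z, k, isCompact_singleton, isPreconnected_singleton,
        singleton_free f hffz, rfl, rfl, by linarith, ?_⟩
      rw [← hw, hwp, hp2]; exact hw.symm
    · -- x = z, y = p, m = k + 1
      obtain ⟨σ, h1, h2, h3, h4, h5⟩ := arc_sub_free f z hz2 γ hγ hzγ hpγ hznfz hp2
      refine ⟨σ, z, p, k + 1, h1, h2, h3, h4, h5, by linarith, ?_⟩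
      rw [fiter_add f k 1 z, fiter_one, ← hw, hwp]
  · by_cases hp2 : p = f z
    · -- x = w, y = z, m = k - 1
      have hkey : f (fiter f (k - 1) w) = f z := by
        have : fiter f (1 + (k - 1)) w = p := by rw [show (1 + (k-1) : ℤ) = k by ring, hwp]
        rw [fiter_add, fiter_one] at this
        rw [this, hp2]
      have hyz : fiter f (k - 1) w = z := f.injective hkey
      obtain ⟨σ, h1, h2, h3, h4, h5⟩ := arc_sub_free f z hz2 γ hγ hwγ hzγ hw hznfz
      exact ⟨σ, w, z, k - 1, h1, h2, h3, h4, h5, by linarith, hyz⟩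
    · -- x = w, y = p, m = k
      obtain ⟨σ, h1, h2, h3, h4, h5⟩ := arc_sub_free f z hz2 γ hγ hwγ hpγ hw hp2
      exact ⟨σ, w, p, k, h1, h2, h3, h4, h5, by linarith, hwp⟩

end Dynamics

end HandelAux

/-- Proposition 1.4, case (ii). -/
theorem handel_prop_1_4_ii (f : ↥Disk ≃ₜ ↥Disk) (z : ↥Disk)
    (hz : f z ≠ z) (hz2 : f (f z) ≠ z)
    (γ : Set ↥Disk) (hγ : IsTranslationArc f z γ)
    (k : ℤ) (hk : 2 ≤ k)
    (hmeet : ((fiter f k '' γ) ∩ γ).Nonempty) :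
    RecurrentHomeo f := by
  obtain ⟨σ, x, y, m, hσc, hσconn, hσfree, hxσ, hyσ, hm, hxy⟩ :=
    HandelAux.exists_free_pair f z hz hz2 γ hγ k hk hmeet
  obtain ⟨X, hXdisk, hXfree, hxX, hyX⟩ :=
    HandelAux.free_pair_disk f σ hσc hσconn hσfree hxσ hyσ
  refine ⟨1, le_rfl, fun _ => X, fun _ => hXdisk, fun _ => hXfree, ?_, ?_⟩
  · intro i j hij
    exact absurd (Subsingleton.elim i j) hij
  · intro i
    exact ⟨m, hm, ⟨y, ⟨x, hxX, hxy⟩, hyX⟩⟩
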